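/- For an odd prime p, the superfactorial sf(p-1) = ∏_{k=1}^{p-1} k! satisfies sf(p-1) ≡ (-1)^((p^2-1)/8) · ((p-1)/2)! (mod p). -/

import Mathlib

def sf (n : ℕ) : ℕ := ∏ k ∈ Finset.Icc 1 n, Nat.factorial k

lemma key_fact (p : ℕ) (hp : p.Prime) : ∀ k, k ≤ p - 1 →
    ((k.factorial : ZMod p) * ((p - 1 - k).factorial : ZMod p)) = (-1) ^ (k + 1) := by
  haveI : Fact p.Prime := ⟨hp⟩
  intro k
  induction k with
  | zero => intro _; simp [ZMod.wilsons_lemma]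
  | succ k ih =>
    intro hk
    have hk' : k ≤ p - 1 := by omega
    have h2le := hp.two_le
    have h1 : p - 1 - k = (p - 1 - (k + 1)) + 1 := by omega
    have hcast : ((p - 1 - k : ℕ) : ZMod p) = -((k : ZMod p) + 1) := by
      have h2 : (p - 1 - k) + (k + 1) = p := by omega
      have h3 : (((p - 1 - k) + (k + 1) : ℕ) : ZMod p) = 0 := by
        rw [h2]; exact ZMod.natCast_self p
      push_cast at h3
      linear_combination h3
    have ihe := ih hk'
    rw [h1, Nat.factorial_succ] at ihe
    push_cast at ihe
    rw [h1] at hcast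
    push_cast at hcast
    rw [hcast] at ihe
    rw [Nat.factorial_succ]
    push_cast
    linear_combination -ihe

theorem stmt3 (p : ℕ) (hp : p.Prime) (hodd : Odd p) :
    (sf (p - 1) : ZMod p) = (-1) ^ ((p ^ 2 - 1) / 8) * (Nat.factorial ((p - 1) / 2) : ZMod p) := by
  obtain ⟨m, hm⟩ := hodd
  have h2le := hp.two_le
  have h0 : sf (p - 1) = ∏ k ∈ Finset.range p, Nat.factorial k := by
    have hp1 : p - 1 + 1 = p := by omega
    rw [sf, ← Finset.Ico_add_one_right_eq_Icc, hp1, Finset.range_eq_Ico,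
      Finset.prod_eq_prod_Ico_succ_bot (by omega : 0 < p)]
    simp
  have hpm : p = (m + 1) + m := by omega
  have hcast : ((sf (p-1) : ℕ) : ZMod p) = ∏ k ∈ Finset.range p, (Nat.factorial k : ZMod p) := by
    rw [h0]; push_cast; rfl
  rw [hcast, show Finset.range p = Finset.range ((m + 1) + m) from by rw [← hpm],
    Finset.prod_range_add, Finset.prod_range_succ]
  have hrefl : (∏ i ∈ Finset.range m, ((Nat.factorial (m + 1 + i) : ZMod p))) =
      ∏ k ∈ Finset.range m, (Nat.factorial (2 * m - k) : ZMod p) := by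
    rw [← Finset.prod_range_reflect (fun i => (Nat.factorial (m + 1 + i) : ZMod p)) m]
    apply Finset.prod_congr rfl
    intro k hk
    simp only [Finset.mem_range] at hk
    congr 2
    omega
  rw [hrefl]
  rw [mul_comm (∏ k ∈ Finset.range m, (Nat.factorial k : ZMod p)) _, mul_assoc, ← Finset.prod_mul_distrib]
  have hkey : ∀ k ∈ Finset.range m, (Nat.factorial k : ZMod p) * (Nat.factorial (2 * m - k) : ZMod p)
      = (-1 : ZMod p) ^ (k + 1) := by
    intro k hk
    simp only [Finset.mem_range] at hk
    have h2m : 2 * m - k = p - 1 - k := by omega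
    rw [h2m]
    exact key_fact p hp k (by omega)
  rw [Finset.prod_congr rfl hkey, Finset.prod_pow_eq_pow_sum]
  have hsum : ∑ k ∈ Finset.range m, (k + 1) = m * (m + 1) / 2 := by
    have hg : (∑ i ∈ Finset.range (m + 1), i) * 2 = m * (m + 1) := by
      rw [Finset.sum_range_id_mul_two, Nat.add_sub_cancel, Nat.mul_comm]
    have h' : ∑ i ∈ Finset.range (m + 1), i = ∑ k ∈ Finset.range m, (k + 1) := by
      rw [Finset.sum_range_succ']
      simp
    omega
  have hexp : (p ^ 2 - 1) / 8 = m * (m + 1) / 2 := by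
    have hsq : p ^ 2 = 4 * (m * (m + 1)) + 1 := by rw [hm]; ring
    omega
  have hm' : (p - 1) / 2 = m := by omega
  rw [hsum, hexp, hm']
  ring
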